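/- Let R be an integral domain that is not a field and has only finitely many maximal ideals, and let K = Frac(R) be its fraction field. Then there exists a topology on K making K a Hausdorff topological field (addition, multiplication, negation, and inversion on K \ {0} are continuous), which is not the discrete topology, and in which the images in K of the non-zero ideals of R form a neighborhood basis of 0. -/

import Mathlib

/-- If `R` is an integral domain, not a field, with finitely many maximal
ideals, then its fraction field `K` carries a non-discrete Hausdorff field topology in
which the images of the non-zero ideals of `R` form a neighborhood basis of `0`. -/
theorem stmt_4 (R : Type*) [CommRing R] [IsDomain R] (hnf : ¬ IsField R)
    (hmax : {I : Ideal R | I.IsMaximal}.Finite) :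
    ∃ t : TopologicalSpace (FractionRing R),
      @T2Space (FractionRing R) t ∧
      @IsTopologicalRing (FractionRing R) t _ ∧
      (∀ x : FractionRing R, x ≠ 0 →
        @ContinuousAt (FractionRing R) (FractionRing R) t t (fun y => y⁻¹) x) ∧
      t ≠ ⊥ ∧
      (@nhds (FractionRing R) t 0).HasBasis (fun I : Ideal R => I ≠ ⊥)
        (fun I : Ideal R => algebraMap R (FractionRing R) '' (I : Set R)) := by
  classical
  set K := FractionRing R
  set φ := algebraMap R K with hφ
  have hinj : Function.Injective φ := IsFractionRing.injective R K
  have hφ0 : ∀ {r : R}, r ≠ 0 → φ r ≠ 0 := by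
    intro r hr h
    exact hr (hinj (by simpa using h))
  -- the product of all maximal ideals
  set P : Ideal R := hmax.toFinset.prod id with hP
  have hPne : P ≠ ⊥ := by
    rw [hP]
    refine Finset.prod_induction id (· ≠ ⊥) (fun a b ha hb h => ?_) ?_ (fun m hm => ?_)
    · rcases Ideal.mul_eq_bot.1 h with h | h <;> [exact ha h; exact hb h]
    · simpa using fun h => hnf (h ▸ (by
        exact absurd (congrArg (1 ∈ ·) h) (by simp [Ideal.one_eq_top])))
    · exact Ring.ne_bot_of_isMaximal_of_not_isField (hmax.mem_toFinset.1 hm) hnf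
  have hPjac : P ≤ Ideal.jacobson ⊥ := by
    refine le_sInf ?_
    rintro m ⟨-, hm⟩
    exact le_trans Ideal.prod_le_inf (Finset.inf_le (hmax.mem_toFinset.2 hm))
  have hunit : ∀ c ∈ P, IsUnit (1 + c) := by
    intro c hc
    have := Ideal.mem_jacobson_bot.1 (hPjac hc) 1
    simpa [add_comm] using this
  -- key inversion estimate
  have key : ∀ (x : K), x ≠ 0 → ∀ I : Ideal R, I ≠ ⊥ →
      ∃ J : Ideal R, J ≠ ⊥ ∧
        ∀ w ∈ φ '' (J : Set R), (x + w)⁻¹ - x⁻¹ ∈ φ '' (I : Set R) := by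
    intro x hx I hI
    obtain ⟨a, b, hb, rfl⟩ := IsFractionRing.div_surjective (A := R) x
    have hb0 : b ≠ 0 := nonZeroDivisors.ne_zero hb
    have hφb : φ b ≠ 0 := hφ0 hb0
    have ha0 : a ≠ 0 := by
      rintro rfl; simp at hx
    have hφa : φ a ≠ 0 := hφ0 ha0
    refine ⟨Ideal.span {a ^ 2} * (I * P), ?_, ?_⟩
    · rw [Ne, Ideal.mul_eq_bot, Ideal.mul_eq_bot]
      push_neg
      exact ⟨by simpa [Ideal.span_singleton_eq_bot] using pow_ne_zero 2 ha0, hI, hPne⟩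
    · rintro w ⟨j, hj, rfl⟩
      obtain ⟨q, hq, rfl⟩ := Ideal.mem_span_singleton_mul.1 hj
      have hqP : q ∈ P := Ideal.mul_le_right hq
      have hqI : q ∈ I := Ideal.mul_le_left hq
      obtain ⟨v, hv⟩ := hunit (a * b * q) (P.mul_mem_left _ hqP)
      have hv0 : (v : R) ≠ 0 := v.ne_zero
      have hvinv : ((v⁻¹ : Rˣ) : R) * (1 + a * b * q) = 1 := by
        rw [← hv]; exact v.inv_mul
      refine ⟨-(((v⁻¹ : Rˣ) : R) * b ^ 2 * q), I.neg_mem (I.mul_mem_left _ hqI), ?_⟩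
      have hxw : φ a / φ b + φ (a ^ 2 * q) = (φ a / φ b) * φ (v : R) := by
        rw [hv]
        push_cast [map_add, map_mul, map_one, map_pow]
        rw [div_add' _ _ _ hφb, div_mul_eq_mul_div, div_left_inj' hφb]
        ring
      have hφv : φ (v : R) ≠ 0 := hφ0 hv0
      have hφvinv : (φ (v : R))⁻¹ = φ ((v⁻¹ : Rˣ) : R) := by
        symm
        exact eq_inv_of_mul_eq_one_left (by rw [← map_mul, Units.inv_mul, map_one])
      rw [hxw, mul_inv, hφvinv, inv_div, div_mul_eq_mul_div, div_sub_div_same,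
        eq_div_iff hφa, ← map_mul, ← map_mul, ← map_sub]
      exact congrArg φ (by linear_combination (-(b : R)) * hvinv)
  have htop : (⊤ : Ideal R) ≠ ⊥ := fun h => (one_ne_zero : (1 : R) ≠ 0) (by
    have h1 : (1 : R) ∈ (⊥ : Ideal R) := h ▸ trivial
    simpa using h1)
  haveI : Nonempty {I : Ideal R // I ≠ ⊥} := ⟨⟨⊤, htop⟩⟩
  set B : {I : Ideal R // I ≠ ⊥} → AddSubgroup K := fun I =>
    AddSubgroup.map φ.toAddMonoidHom (I.1.toAddSubgroup) with hBdef
  have hBset : ∀ I, (B I : Set K) = φ '' (I.1 : Set R) := by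
    intro I
    rw [hBdef]
    simp [AddSubgroup.coe_map]
  have hB : RingSubgroupsBasis B := by
    refine .of_comm B (fun I J => ?_) (fun I => ?_) (fun x I => ?_)
    · refine ⟨⟨I.1 * J.1, by rw [Ne, Ideal.mul_eq_bot]; push_neg; exact ⟨I.2, J.2⟩⟩,
        le_inf ?_ ?_⟩ <;> rintro _ ⟨r, hr, rfl⟩
      · exact ⟨r, Ideal.mul_le_left hr, rfl⟩
      · exact ⟨r, Ideal.mul_le_right hr, rfl⟩
    · refine ⟨I, ?_⟩
      rintro _ ⟨_, ⟨r, hr, rfl⟩, _, ⟨s, hs, rfl⟩, rfl⟩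
      exact ⟨r * s, I.1.mul_mem_right s hr, by exact map_mul φ r s⟩
    · obtain ⟨a, b, hb, rfl⟩ := IsFractionRing.div_surjective (A := R) x
      have hb0 : b ≠ 0 := nonZeroDivisors.ne_zero hb
      refine ⟨⟨Ideal.span {b} * I.1, by
        rw [Ne, Ideal.mul_eq_bot]; push_neg
        exact ⟨by simpa [Ideal.span_singleton_eq_bot] using hb0, I.2⟩⟩, ?_⟩
      rintro _ ⟨j, hj, rfl⟩
      obtain ⟨m, hm, rfl⟩ := Ideal.mem_span_singleton_mul.1 hj
      refine ⟨a * m, I.1.mul_mem_left a hm, ?_⟩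
      show φ (a * m) = φ a / φ b * φ (b * m)
      rw [map_mul, map_mul]
      rw [div_mul_eq_mul_div, eq_div_iff (hφ0 hb0)]
      ring
  have hbasis0 : (@nhds K hB.topology 0).HasBasis (fun I : Ideal R => I ≠ ⊥)
      (fun I => φ '' (I : Set R)) := by
    refine hB.hasBasis_nhds_zero.to_hasBasis
      (fun i _ => ⟨i.1, i.2, by rw [← hBset i]⟩)
      (fun I hI => ⟨⟨I, hI⟩, trivial, by rw [hBset ⟨I, hI⟩]⟩)
  have htr : @IsTopologicalRing K hB.topology _ := hB.toRingFilterBasis.isTopologicalRing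
  refine ⟨hB.topology, ?_, htr, ?_, ?_, hbasis0⟩
  · -- T2
    letI := hB.topology
    haveI : IsTopologicalRing K := htr
    apply IsTopologicalAddGroup.t2Space_of_zero_sep
    intro x hx
    by_cases hxr : x ∈ Set.range φ
    · obtain ⟨r, rfl⟩ := hxr
      have hr : r ≠ 0 := fun h => hx (by simp [h])
      obtain ⟨m, hm⟩ := Ideal.exists_maximal R
      have hmne : m ≠ ⊥ := Ring.ne_bot_of_isMaximal_of_not_isField hm hnf
      obtain ⟨c, hcm, hc0⟩ := (Submodule.ne_bot_iff _).1 hmne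
      refine ⟨φ '' ((Ideal.span {r * c} : Ideal R) : Set R), hbasis0.mem_of_mem (by
        simpa [Ideal.span_singleton_eq_bot] using mul_ne_zero hr hc0), ?_⟩
      rintro ⟨s, hs, hse⟩
      obtain ⟨d, hd⟩ := Ideal.mem_span_singleton.1 hs
      have hrs : r = s := hinj hse.symm
      have h1 : c * d = 1 := by
        have : r * 1 = r * (c * d) := by
          rw [mul_one]
          nth_rewrite 1 [hrs, hd]
          ring
        exact (mul_left_cancel₀ hr this).symm
      exact hm.ne_top (Ideal.eq_top_of_isUnit_mem m hcm (IsUnit.of_mul_eq_one d h1))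
    · refine ⟨φ '' ((⊤ : Ideal R) : Set R), hbasis0.mem_of_mem htop, fun h => hxr ?_⟩
      obtain ⟨r, -, hr⟩ := h
      exact ⟨r, hr⟩
  · -- inversion continuity
    intro x hx
    letI := hB.topology
    show Filter.Tendsto (fun y : K => y⁻¹) (nhds x) (nhds x⁻¹)
    rw [(hB.hasBasis_nhds x).tendsto_iff (hB.hasBasis_nhds x⁻¹)]
    intro i _
    obtain ⟨J, hJ, hJ'⟩ := key x hx i.1 i.2
    refine ⟨⟨J, hJ⟩, trivial, fun y hy => ?_⟩
    have hy' : y - x ∈ (B ⟨J, hJ⟩ : Set K) := hy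
    rw [hBset] at hy'
    have hres := hJ' (y - x) hy'
    rw [add_sub_cancel] at hres
    show y⁻¹ - x⁻¹ ∈ (B i : Set K)
    rw [hBset]
    exact hres
  · -- non-discrete
    intro h
    have h0 : {(0 : K)} ∈ @nhds K hB.topology 0 := by
      rw [h]
      exact (@mem_nhds_discrete K ⊥ (discreteTopology_bot K) 0 {0}).2 rfl
    obtain ⟨I, hI, hsub⟩ := hbasis0.mem_iff.1 h0
    obtain ⟨r, hr, hr0⟩ := (Submodule.ne_bot_iff _).1 hI
    exact hφ0 hr0 (hsub ⟨r, hr, rfl⟩)
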